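/- Let f : [0,T) × [0,1] → ℝⁿ be a smooth solution of ∂ₜf = V + φτ, where V is the normal velocity and φ a smooth scalar function. Then for every smooth normal vector field ψ along f (i.e. ⟨ψ(t,x), τ(t,x)⟩ = 0 for all (t,x)), the commutator identity (∇ₜ∇ₛ − ∇ₛ∇ₜ)ψ = (⟨κ, V⟩ − ∂ₛφ) ∇ₛψ + ⟨κ, ψ⟩ ∇ₛV − ⟨∇ₛV, ψ⟩ κ holds on (0,T) × [0,1]. -/

import Mathlib

open Set MeasureTheory
open scoped RealInnerProductSpace

noncomputable section

/-- Arc-length derivative `∂ₛ g = |∂ₓ f|⁻¹ ∂ₓ g` along the curve `f`. -/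
def sDeriv {n : ℕ} {F : Type*} [NormedAddCommGroup F] [NormedSpace ℝ F]
    (f : ℝ → EuclideanSpace ℝ (Fin n)) (g : ℝ → F) (x : ℝ) : F :=
  ‖deriv f x‖⁻¹ • deriv g x

/-- The unit tangent `τ = ∂ₛ f`. -/
def tau {n : ℕ} (f : ℝ → EuclideanSpace ℝ (Fin n)) : ℝ → EuclideanSpace ℝ (Fin n) :=
  sDeriv f f

/-- The curvature vector `κ = ∂ₛ² f`. -/
def kappa {n : ℕ} (f : ℝ → EuclideanSpace ℝ (Fin n)) : ℝ → EuclideanSpace ℝ (Fin n) :=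
  sDeriv f (tau f)

/-- Normal projection of the arc-length derivative: `∇ₛψ = ∂ₛψ − ⟨∂ₛψ, τ⟩ τ`. -/
def nablaS {n : ℕ} (f ψ : ℝ → EuclideanSpace ℝ (Fin n)) (x : ℝ) :
    EuclideanSpace ℝ (Fin n) :=
  sDeriv f ψ x - ⟪sDeriv f ψ x, tau f x⟫ • tau f x

/-- Partial time derivative of a time-dependent field. -/
def pT {F : Type*} [NormedAddCommGroup F] [NormedSpace ℝ F]
    (g : ℝ → ℝ → F) (t x : ℝ) : F :=
  deriv (fun s => g s x) t

/-- Normal projection of the time derivative: `∇ₜψ = ∂ₜψ − ⟨∂ₜψ, τ⟩ τ`. -/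
def nablaT {n : ℕ} (f ψ : ℝ → ℝ → EuclideanSpace ℝ (Fin n)) (t x : ℝ) :
    EuclideanSpace ℝ (Fin n) :=
  pT ψ t x - ⟪pT ψ t x, tau (f t) x⟫ • tau (f t) x

/-! ### Auxiliary infrastructure -/

section Aux

variable {F : Type*} [NormedAddCommGroup F] [NormedSpace ℝ F]

lemma wtop1 : (1 : WithTop ℕ∞) ≤ ((⊤ : ℕ∞) : WithTop ℕ∞) := by
  have := WithTop.coe_le_coe.2 (le_top : (1 : ℕ∞) ≤ ⊤); simpa using this

lemma wtop2 : (2 : WithTop ℕ∞) ≤ ((⊤ : ℕ∞) : WithTop ℕ∞) := by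
  have := WithTop.coe_le_coe.2 (le_top : (2 : ℕ∞) ≤ ⊤); simpa using this

lemma wtops : ((⊤ : ℕ∞) : WithTop ℕ∞) + 1 ≤ ((⊤ : ℕ∞) : WithTop ℕ∞) := by
  exact_mod_cast (le_top : (⊤ + 1 : ℕ∞) ≤ ⊤)

lemma hasDerivAt_fst' {Φ : ℝ × ℝ → F} (hΦ : ContDiff ℝ (⊤ : ℕ∞) Φ) (t x : ℝ) :
    HasDerivAt (fun s => Φ (s, x)) (fderiv ℝ Φ (t, x) (1, 0)) t := by
  have h1 : HasDerivAt (fun s : ℝ => (s, x)) ((1 : ℝ), (0 : ℝ)) t :=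
    HasDerivAt.prodMk (hasDerivAt_id t) (hasDerivAt_const t x)
  exact ((hΦ.differentiable (by simp) (t, x)).hasFDerivAt).comp_hasDerivAt t h1

lemma hasDerivAt_snd' {Φ : ℝ × ℝ → F} (hΦ : ContDiff ℝ (⊤ : ℕ∞) Φ) (t x : ℝ) :
    HasDerivAt (fun y => Φ (t, y)) (fderiv ℝ Φ (t, x) (0, 1)) x := by
  have h1 : HasDerivAt (fun y : ℝ => (t, y)) ((0 : ℝ), (1 : ℝ)) x :=
    HasDerivAt.prodMk (hasDerivAt_const x t) (hasDerivAt_id x)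
  exact ((hΦ.differentiable (by simp) (t, x)).hasFDerivAt).comp_hasDerivAt x h1

lemma contDiff_apply_clm {Φ : ℝ × ℝ → F} (hΦ : ContDiff ℝ (⊤ : ℕ∞) Φ) (v : ℝ × ℝ) :
    ContDiff ℝ (⊤ : ℕ∞) (fun q => fderiv ℝ Φ q v) :=
  (hΦ.fderiv_right wtops).clm_apply contDiff_const

lemma symm_second {Φ : ℝ × ℝ → F} (hΦ : ContDiff ℝ (⊤ : ℕ∞) Φ) (q : ℝ × ℝ) (v w : ℝ × ℝ) :
    fderiv ℝ (fun q' => fderiv ℝ Φ q' v) q w = fderiv ℝ (fun q' => fderiv ℝ Φ q' w) q v := by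
  have hs : IsSymmSndFDerivAt ℝ Φ q := hΦ.contDiffAt.isSymmSndFDerivAt (by simpa using wtop2)
  have hd : DifferentiableAt ℝ (fderiv ℝ Φ) q :=
    ((hΦ.fderiv_right wtops).differentiable (by simp)).differentiableAt
  have h1 : ∀ u : ℝ × ℝ, fderiv ℝ (fun q' => fderiv ℝ Φ q' u) q
      = (fderiv ℝ (fderiv ℝ Φ) q).flip u := by
    intro u
    rw [fderiv_clm_apply hd (differentiableAt_const u)]
    simp
  rw [h1 v, h1 w]
  simpa using hs w v

variable {g : ℝ → ℝ → F}

lemma contDiff_slice (hg : ContDiff ℝ (⊤ : ℕ∞) (Function.uncurry g)) (t : ℝ) :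
    ContDiff ℝ (⊤ : ℕ∞) (g t) :=
  hg.comp (contDiff_const.prodMk contDiff_id)

lemma contDiff_deriv_slice (hg : ContDiff ℝ (⊤ : ℕ∞) (Function.uncurry g)) (t : ℝ) :
    ContDiff ℝ (⊤ : ℕ∞) (deriv (g t)) := by
  have e : deriv (g t) = fun y => fderiv ℝ (Function.uncurry g) (t, y) (0, 1) :=
    funext fun y => (hasDerivAt_snd' hg t y).deriv
  rw [e]
  exact (contDiff_apply_clm hg (0, 1)).comp (contDiff_const.prodMk contDiff_id)

lemma hasDerivAt_pT (hg : ContDiff ℝ (⊤ : ℕ∞) (Function.uncurry g)) (t x : ℝ) :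
    HasDerivAt (fun s => g s x) (pT g t x) t := by
  have h := hasDerivAt_fst' hg t x
  have e : pT g t x = fderiv ℝ (Function.uncurry g) (t, x) (1, 0) := h.deriv
  rw [e]; exact h

lemma contDiff_pT_slice (hg : ContDiff ℝ (⊤ : ℕ∞) (Function.uncurry g)) (t : ℝ) :
    ContDiff ℝ (⊤ : ℕ∞) (fun y => pT g t y) := by
  have e : (fun y => pT g t y) = fun y => fderiv ℝ (Function.uncurry g) (t, y) (1, 0) :=
    funext fun y => (hasDerivAt_fst' hg t y).deriv
  rw [e]
  exact (contDiff_apply_clm hg (1, 0)).comp (contDiff_const.prodMk contDiff_id)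

lemma hasDerivAt_mixed (hg : ContDiff ℝ (⊤ : ℕ∞) (Function.uncurry g)) (t x : ℝ) :
    HasDerivAt (fun s => deriv (g s) x) (deriv (fun y => pT g t y) x) t := by
  have hP2 : ContDiff ℝ (⊤ : ℕ∞) (fun q : ℝ × ℝ => fderiv ℝ (Function.uncurry g) q (0, 1)) :=
    contDiff_apply_clm hg _
  have hP1 : ContDiff ℝ (⊤ : ℕ∞) (fun q : ℝ × ℝ => fderiv ℝ (Function.uncurry g) q (1, 0)) :=
    contDiff_apply_clm hg _
  have e2 : (fun s => deriv (g s) x) = fun s => fderiv ℝ (Function.uncurry g) (s, x) (0, 1) :=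
    funext fun s => (hasDerivAt_snd' hg s x).deriv
  have e1 : (fun y => pT g t y) = fun y => fderiv ℝ (Function.uncurry g) (t, y) (1, 0) :=
    funext fun y => (hasDerivAt_fst' hg t y).deriv
  rw [e2, e1]
  have h2 := hasDerivAt_snd' hP1 t x
  rw [h2.deriv, symm_second hg (t, x) (1, 0) (0, 1)]
  exact hasDerivAt_fst' hP2 t x

lemma continuousAt_deriv {h : ℝ → F} {x : ℝ} (hh : ContDiffAt ℝ (⊤ : ℕ∞) h x) :
    ContinuousAt (deriv h) x := by
  obtain ⟨u, huo, hxu, hcd⟩ := hh.contDiffOn' (m := 2) wtop2 (by simp)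
  rw [insert_eq_of_mem (mem_univ x), univ_inter] at hcd
  exact (hcd.continuousOn_deriv_of_isOpen huo one_le_two).continuousAt (huo.mem_nhds hxu)

lemma tau_unit {n : ℕ} (g : ℝ → EuclideanSpace ℝ (Fin n)) (y : ℝ) (h : deriv g y ≠ 0) :
    ⟪tau g y, tau g y⟫ = 1 := by
  have e : tau g y = ‖deriv g y‖⁻¹ • deriv g y := rfl
  have h0 : ‖deriv g y‖ ≠ 0 := norm_ne_zero_iff.2 h
  rw [e, real_inner_smul_left, real_inner_smul_right, real_inner_self_eq_norm_sq]
  field_simp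

end Aux

/-! ### The interior case -/

set_option maxHeartbeats 2000000 in
private lemma key_interior {n : ℕ} {T : ℝ}
    {f V : ℝ → ℝ → EuclideanSpace ℝ (Fin n)} {φ : ℝ → ℝ → ℝ}
    (hf : ContDiff ℝ (⊤ : ℕ∞) (Function.uncurry f))
    (hV : ContDiff ℝ (⊤ : ℕ∞) (Function.uncurry V))
    (hφ : ContDiff ℝ (⊤ : ℕ∞) (Function.uncurry φ))
    (hreg : ∀ t ∈ Ico (0 : ℝ) T, ∀ x ∈ Icc (0 : ℝ) 1, deriv (f t) x ≠ 0)
    (hnormal : ∀ t ∈ Ico (0 : ℝ) T, ∀ x ∈ Icc (0 : ℝ) 1, ⟪V t x, tau (f t) x⟫ = 0)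
    (hflow : ∀ t ∈ Ico (0 : ℝ) T, ∀ x ∈ Icc (0 : ℝ) 1,
      pT f t x = V t x + φ t x • tau (f t) x)
    {ψ : ℝ → ℝ → EuclideanSpace ℝ (Fin n)}
    (hψ : ContDiff ℝ (⊤ : ℕ∞) (Function.uncurry ψ))
    (hψnormal : ∀ t ∈ Ico (0 : ℝ) T, ∀ x ∈ Icc (0 : ℝ) 1, ⟪ψ t x, tau (f t) x⟫ = 0)
    {t x : ℝ} (ht : t ∈ Ioo (0 : ℝ) T) (hx : x ∈ Ioo (0 : ℝ) 1) :
    nablaT f (fun s => nablaS (f s) (ψ s)) t x - nablaS (f t) (nablaT f ψ t) x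
      = (⟪kappa (f t) x, V t x⟫ - sDeriv (f t) (φ t) x) • nablaS (f t) (ψ t) x
        + ⟪kappa (f t) x, ψ t x⟫ • nablaS (f t) (V t) x
        - ⟪nablaS (f t) (V t) x, ψ t x⟫ • kappa (f t) x := by
  have htI : t ∈ Ico (0 : ℝ) T := ⟨ht.1.le, ht.2⟩
  have hxI : x ∈ Icc (0 : ℝ) 1 := ⟨hx.1.le, hx.2.le⟩
  have hmemx : Ioo (0 : ℝ) 1 ∈ nhds x := Ioo_mem_nhds hx.1 hx.2
  have hmemt : Ioo (0 : ℝ) T ∈ nhds t := Ioo_mem_nhds ht.1 ht.2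
  have hFx : deriv (f t) x ≠ 0 := hreg t htI x hxI
  have hu : ‖deriv (f t) x‖ ≠ 0 := norm_ne_zero_iff.2 hFx
  -- x-direction derivatives at x
  have Dψx : HasDerivAt (ψ t) (deriv (ψ t) x) x :=
    (((contDiff_slice hψ t).differentiable (by simp)) x).hasDerivAt.congr_deriv rfl
  have DVx : HasDerivAt (V t) (deriv (V t) x) x :=
    (((contDiff_slice hV t).differentiable (by simp)) x).hasDerivAt.congr_deriv rfl
  have Dφx : HasDerivAt (φ t) (deriv (φ t) x) x :=
    (((contDiff_slice hφ t).differentiable (by simp)) x).hasDerivAt.congr_deriv rfl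
  have hdCD : ContDiffAt ℝ (⊤ : ℕ∞) (deriv (f t)) x := (contDiff_deriv_slice hf t).contDiffAt
  have hτCD : ContDiffAt ℝ (⊤ : ℕ∞) (tau (f t)) x := ((hdCD.norm ℝ hFx).inv hu).smul hdCD
  have hτdiff : DifferentiableAt ℝ (tau (f t)) x := hτCD.differentiableAt (by simp)
  have hκeq : deriv (tau (f t)) x = ‖deriv (f t) x‖ • kappa (f t) x := by
    show deriv (tau (f t)) x = ‖deriv (f t) x‖ • (‖deriv (f t) x‖⁻¹ • deriv (tau (f t)) x)
    rw [smul_smul, mul_inv_cancel₀ hu, one_smul]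
  have Dτ : HasDerivAt (tau (f t)) (‖deriv (f t) x‖ • kappa (f t) x) x :=
    hκeq ▸ hτdiff.hasDerivAt
  -- pointwise algebraic relations
  have hunit : ∀ y, deriv (f t) y ≠ 0 → ⟪tau (f t) y, tau (f t) y⟫ = 1 :=
    fun y hy => tau_unit (f t) y hy
  have hττ : ⟪tau (f t) x, tau (f t) x⟫ = 1 := hunit x hFx
  have hψτ0 : ⟪ψ t x, tau (f t) x⟫ = 0 := hψnormal t htI x hxI
  have hVτ0 : ⟪V t x, tau (f t) x⟫ = 0 := hnormal t htI x hxI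
  have hκτ : ⟪kappa (f t) x, tau (f t) x⟫ = 0 := by
    have hev : (fun y => ⟪tau (f t) y, tau (f t) y⟫) =ᶠ[nhds x] fun _ => (1 : ℝ) := by
      have hne : ∀ᶠ y in nhds x, deriv (f t) y ≠ 0 :=
        ((contDiff_deriv_slice hf t).continuous.continuousAt).eventually_ne hFx
      filter_upwards [hne] with y hy using hunit y hy
    have h0 : deriv (fun y => ⟪tau (f t) y, tau (f t) y⟫) x = 0 := by
      rw [hev.deriv_eq]; simp
    have hrel := ((Dτ.inner ℝ Dτ).deriv).symm.trans h0
    rw [real_inner_smul_right, real_inner_smul_left] at hrel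
    have hc : ⟪tau (f t) x, kappa (f t) x⟫ = ⟪kappa (f t) x, tau (f t) x⟫ := real_inner_comm _ _
    rw [hc] at hrel
    have h2 : ‖deriv (f t) x‖ * (2 * ⟪kappa (f t) x, tau (f t) x⟫) = 0 := by linarith
    have h3 := (mul_eq_zero.1 h2).resolve_left hu
    linarith
  -- x-derivatives of the normality relations
  have relψ : ⟪ψ t x, ‖deriv (f t) x‖ • kappa (f t) x⟫
      + ⟪deriv (ψ t) x, tau (f t) x⟫ = 0 := by
    refine ((Dψx.inner ℝ Dτ).deriv).symm.trans ?_
    have hev : (fun y => ⟪ψ t y, tau (f t) y⟫) =ᶠ[nhds x] fun _ => (0 : ℝ) := by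
      filter_upwards [hmemx] with y hy using hψnormal t htI y (Ioo_subset_Icc_self hy)
    rw [hev.deriv_eq]; simp
  have relV : ⟪V t x, ‖deriv (f t) x‖ • kappa (f t) x⟫
      + ⟪deriv (V t) x, tau (f t) x⟫ = 0 := by
    refine ((DVx.inner ℝ Dτ).deriv).symm.trans ?_
    have hev : (fun y => ⟪V t y, tau (f t) y⟫) =ᶠ[nhds x] fun _ => (0 : ℝ) := by
      filter_upwards [hmemx] with y hy using hnormal t htI y (Ioo_subset_Icc_self hy)
    rw [hev.deriv_eq]; simp
  -- mixed derivative of f via the flow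
  have hFXT : deriv (fun y => pT f t y) x
      = deriv (V t) x + (φ t x • (‖deriv (f t) x‖ • kappa (f t) x)
          + deriv (φ t) x • tau (f t) x) := by
    have hev : (fun y => pT f t y) =ᶠ[nhds x] fun y => V t y + φ t y • tau (f t) y := by
      filter_upwards [hmemx] with y hy using hflow t htI y (Ioo_subset_Icc_self hy)
    rw [hev.deriv_eq]
    exact (DVx.add (Dφx.smul Dτ)).deriv
  -- t-direction derivatives at t
  have DFxt : HasDerivAt (fun s => deriv (f s) x) (deriv (fun y => pT f t y) x) t :=
    hasDerivAt_mixed hf t x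
  have DΨxt : HasDerivAt (fun s => deriv (ψ s) x) (deriv (fun y => pT ψ t y) x) t :=
    hasDerivAt_mixed hψ t x
  have Dψt : HasDerivAt (fun s => ψ s x) (pT ψ t x) t := hasDerivAt_pT hψ t x
  have DU : HasDerivAt (fun s => ‖deriv (f s) x‖) (deriv (fun s => ‖deriv (f s) x‖) t) t :=
    (DFxt.differentiableAt.norm ℝ hFx).hasDerivAt.congr_deriv rfl
  have hut : ‖deriv (f t) x‖ * deriv (fun s => ‖deriv (f s) x‖) t
      = ⟪deriv (f t) x, deriv (fun y => pT f t y) x⟫ := by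
    have h1 := DFxt.norm_sq
    have h2 := DU.pow 2
    have h3 := h2.unique h1
    simp only [show (2:ℕ) - 1 = 1 from rfl, pow_one, Nat.cast_ofNat] at h3
    linarith
  have DW : HasDerivAt (fun s => ‖deriv (f s) x‖⁻¹)
      (-(deriv (fun s => ‖deriv (f s) x‖) t) / ‖deriv (f t) x‖ ^ 2) t := DU.inv hu
  have Dτt : HasDerivAt (fun s => tau (f s) x) _ t := DW.smul DFxt
  have relψt : ⟪ψ t x, ‖deriv (f t) x‖⁻¹ • deriv (fun y => pT f t y) x
        + (-(deriv (fun s => ‖deriv (f s) x‖) t) / ‖deriv (f t) x‖ ^ 2) • deriv (f t) x⟫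
      + ⟪pT ψ t x, tau (f t) x⟫ = 0 := by
    refine ((Dψt.inner ℝ Dτt).deriv).symm.trans ?_
    have hev : (fun s => ⟪ψ s x, tau (f s) x⟫) =ᶠ[nhds t] fun _ => (0 : ℝ) := by
      filter_upwards [hmemt] with s hs using hψnormal s ⟨hs.1.le, hs.2⟩ x hxI
    rw [hev.deriv_eq]; simp
  -- the two composite derivatives
  have DSD := DW.smul DΨxt
  have DG : HasDerivAt (fun s => nablaS (f s) (ψ s) x) _ t :=
    DSD.sub ((DSD.inner ℝ Dτt).smul Dτt)
  have eDG := DG.deriv; simp only [Pi.smul_apply'] at eDG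
  have DΨTx : HasDerivAt (fun y => pT ψ t y) (deriv (fun y => pT ψ t y) x) x :=
    (((contDiff_pT_slice hψ t).differentiable (by simp)) x).hasDerivAt.congr_deriv rfl
  have DH : HasDerivAt (nablaT f ψ t) _ x := DΨTx.sub ((DΨTx.inner ℝ Dτ).smul Dτ)
  have eDH := DH.deriv
  -- assemble the goal
  rw [show nablaT f (fun s => nablaS (f s) (ψ s)) t x
      = deriv (fun s => nablaS (f s) (ψ s) x) t
        - ⟪deriv (fun s => nablaS (f s) (ψ s) x) t, tau (f t) x⟫ • tau (f t) x from rfl]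
  rw [eDG]
  rw [show nablaS (f t) (nablaT f ψ t) x
      = ‖deriv (f t) x‖⁻¹ • deriv (nablaT f ψ t) x
        - ⟪‖deriv (f t) x‖⁻¹ • deriv (nablaT f ψ t) x, tau (f t) x⟫ • tau (f t) x from rfl]
  rw [eDH]
  rw [show sDeriv (f t) (φ t) x = ‖deriv (f t) x‖⁻¹ • deriv (φ t) x from rfl]
  rw [show nablaS (f t) (ψ t) x
      = ‖deriv (f t) x‖⁻¹ • deriv (ψ t) x
        - ⟪‖deriv (f t) x‖⁻¹ • deriv (ψ t) x, tau (f t) x⟫ • tau (f t) x from rfl]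
  rw [show nablaS (f t) (V t) x
      = ‖deriv (f t) x‖⁻¹ • deriv (V t) x
        - ⟪‖deriv (f t) x‖⁻¹ • deriv (V t) x, tau (f t) x⟫ • tau (f t) x from rfl]
  rw [hFXT] at relψt ⊢
  rw [hFXT] at hut
  set u : ℝ := ‖deriv (f t) x‖ with hudef
  have hτκ : ⟪tau (f t) x, kappa (f t) x⟫ = 0 := by
    rw [real_inner_comm]; exact hκτ
  have hFxτ : deriv (f t) x = u • tau (f t) x := by
    have e : tau (f t) x = u⁻¹ • deriv (f t) x := rfl
    rw [e, smul_smul, mul_inv_cancel₀ hu, one_smul]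
  rw [hFxτ] at relψt hut ⊢
  -- canonical orientations
  have c1 : ⟪kappa (f t) x, V t x⟫ = ⟪V t x, kappa (f t) x⟫ := real_inner_comm _ _
  have c2 : ⟪kappa (f t) x, ψ t x⟫ = ⟪ψ t x, kappa (f t) x⟫ := real_inner_comm _ _
  have c3 : ⟪deriv (V t) x, ψ t x⟫ = ⟪ψ t x, deriv (V t) x⟫ := real_inner_comm _ _
  have c4 : ⟪tau (f t) x, ψ t x⟫ = ⟪ψ t x, tau (f t) x⟫ := real_inner_comm _ _
  have c5 : ⟪tau (f t) x, V t x⟫ = ⟪V t x, tau (f t) x⟫ := real_inner_comm _ _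
  have c6 : ⟪tau (f t) x, deriv (V t) x⟫ = ⟪deriv (V t) x, tau (f t) x⟫ := real_inner_comm _ _
  have c7 : ⟪tau (f t) x, deriv (ψ t) x⟫ = ⟪deriv (ψ t) x, tau (f t) x⟫ := real_inner_comm _ _
  -- solved relations
  have hΨXτ : ⟪deriv (ψ t) x, tau (f t) x⟫ = -(u * ⟪ψ t x, kappa (f t) x⟫) := by
    rw [real_inner_smul_right] at relψ; linarith
  have hVXτ : ⟪deriv (V t) x, tau (f t) x⟫ = -(u * ⟪V t x, kappa (f t) x⟫) := by
    rw [real_inner_smul_right] at relV; linarith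
  have huu : u * u⁻¹ = 1 := mul_inv_cancel₀ hu
  have hut2 : deriv (fun s => ‖deriv (f s) x‖) t
      = ⟪deriv (V t) x, tau (f t) x⟫ + deriv (φ t) x := by
    simp only [inner_add_left, inner_add_right, inner_sub_left, inner_sub_right,
      real_inner_smul_left, real_inner_smul_right, hττ, hτκ, hκτ, hψτ0, hVτ0, c6,
      mul_zero, mul_one, zero_mul, add_zero, zero_add] at hut
    exact mul_left_cancel₀ hu (hut.trans (by ring))
  have hΨTτ : ⟪pT ψ t x, tau (f t) x⟫
      = -(u⁻¹ * ⟪ψ t x, deriv (V t) x⟫) - φ t x * ⟪ψ t x, kappa (f t) x⟫ := by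
    simp only [inner_add_left, inner_add_right, inner_sub_left, inner_sub_right,
      real_inner_smul_left, real_inner_smul_right, hττ, hτκ, hκτ, hψτ0, hVτ0,
      mul_zero, mul_one, zero_mul, add_zero, zero_add] at relψt
    linear_combination relψt - (φ t x * ⟪ψ t x, kappa (f t) x⟫) * huu
  -- final algebra
  clear DG DH DSD Dτt DFxt DΨxt Dψt DU DW DΨTx Dψx DVx Dφx Dτ hτdiff hτCD hdCD hκeq
  clear relψ relV relψt hut hFXT hunit hflow hnormal hψnormal hreg hf hV hφ hψ
  clear_value u
  simp only [inner_add_left, inner_add_right, inner_sub_left, inner_sub_right,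
    real_inner_smul_left, real_inner_smul_right, inner_neg_left, inner_neg_right,
    smul_eq_mul, hττ, hτκ, hκτ, hψτ0, hVτ0, c1, c2, c3, c4, c5, c6, c7,
    hΨXτ, hVXτ, hut2, hΨTτ,
    mul_zero, mul_one, zero_mul, add_zero, zero_add, mul_neg, neg_mul]
  match_scalars <;> field_simp <;> ring

/-- Commutator identity for `∇ₜ` and `∇ₛ` acting on a normal field `ψ` along the flow
`∂ₜ f = V + φ τ`:
`(∇ₜ∇ₛ − ∇ₛ∇ₜ)ψ = (⟨κ, V⟩ − ∂ₛφ) ∇ₛψ + ⟨κ, ψ⟩ ∇ₛV − ⟨∇ₛV, ψ⟩ κ`. -/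
theorem normal_commutator {n : ℕ} (hn : 2 ≤ n) (T : ℝ) (hT : 0 < T)
    (f V : ℝ → ℝ → EuclideanSpace ℝ (Fin n)) (φ : ℝ → ℝ → ℝ)
    (hf : ContDiff ℝ (⊤ : ℕ∞) (Function.uncurry f))
    (hV : ContDiff ℝ (⊤ : ℕ∞) (Function.uncurry V))
    (hφ : ContDiff ℝ (⊤ : ℕ∞) (Function.uncurry φ))
    (hreg : ∀ t ∈ Ico (0 : ℝ) T, ∀ x ∈ Icc (0 : ℝ) 1, deriv (f t) x ≠ 0)
    (hnormal : ∀ t ∈ Ico (0 : ℝ) T, ∀ x ∈ Icc (0 : ℝ) 1, ⟪V t x, tau (f t) x⟫ = 0)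
    (hflow : ∀ t ∈ Ico (0 : ℝ) T, ∀ x ∈ Icc (0 : ℝ) 1,
      pT f t x = V t x + φ t x • tau (f t) x)
    (ψ : ℝ → ℝ → EuclideanSpace ℝ (Fin n))
    (hψ : ContDiff ℝ (⊤ : ℕ∞) (Function.uncurry ψ))
    (hψnormal : ∀ t ∈ Ico (0 : ℝ) T, ∀ x ∈ Icc (0 : ℝ) 1, ⟪ψ t x, tau (f t) x⟫ = 0) :
    ∀ t ∈ Ioo (0 : ℝ) T, ∀ x ∈ Icc (0 : ℝ) 1,
      nablaT f (fun s => nablaS (f s) (ψ s)) t x - nablaS (f t) (nablaT f ψ t) x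
        = (⟪kappa (f t) x, V t x⟫ - sDeriv (f t) (φ t) x) • nablaS (f t) (ψ t) x
          + ⟪kappa (f t) x, ψ t x⟫ • nablaS (f t) (V t) x
          - ⟪nablaS (f t) (V t) x, ψ t x⟫ • kappa (f t) x := by
  intro t ht x hx
  by_cases hxI : x ∈ Ioo (0 : ℝ) 1
  · exact key_interior hf hV hφ hreg hnormal hflow hψ hψnormal ht hxI
  -- boundary case by continuity
  have hFx : deriv (f t) x ≠ 0 := hreg t ⟨ht.1.le, ht.2⟩ x hx
  have hu : ‖deriv (f t) x‖ ≠ 0 := norm_ne_zero_iff.2 hFx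
  have hdCD : ContDiff ℝ (⊤ : ℕ∞) (deriv (f t)) := contDiff_deriv_slice hf t
  have hwCA : ContinuousAt (fun y => ‖deriv (f t) y‖⁻¹) x :=
    (hdCD.continuous.norm.continuousAt).inv₀ hu
  have hτCD : ContDiffAt ℝ (⊤ : ℕ∞) (tau (f t)) x :=
    ((hdCD.contDiffAt.norm ℝ hFx).inv hu).smul hdCD.contDiffAt
  have hτCA : ContinuousAt (tau (f t)) x := hτCD.continuousAt
  have hdτCA : ContinuousAt (deriv (tau (f t))) x := continuousAt_deriv hτCD
  have hκCA : ContinuousAt (kappa (f t)) x := hwCA.smul hdτCA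
  have hψCA : ContinuousAt (ψ t) x := (contDiff_slice hψ t).continuous.continuousAt
  have hVCA : ContinuousAt (V t) x := (contDiff_slice hV t).continuous.continuousAt
  have hdψCA : ContinuousAt (deriv (ψ t)) x :=
    (contDiff_deriv_slice hψ t).continuous.continuousAt
  have hdVCA : ContinuousAt (deriv (V t)) x :=
    (contDiff_deriv_slice hV t).continuous.continuousAt
  have hdφCA : ContinuousAt (deriv (φ t)) x :=
    (contDiff_deriv_slice hφ t).continuous.continuousAt
  have hnSψCA : ContinuousAt (nablaS (f t) (ψ t)) x :=
    (hwCA.smul hdψCA).sub (((hwCA.smul hdψCA).inner (𝕜 := ℝ) hτCA).smul hτCA)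
  have hnSVCA : ContinuousAt (nablaS (f t) (V t)) x :=
    (hwCA.smul hdVCA).sub (((hwCA.smul hdVCA).inner (𝕜 := ℝ) hτCA).smul hτCA)
  have hsDφCA : ContinuousAt (sDeriv (f t) (φ t)) x := hwCA.smul hdφCA
  have hpTψCD : ContDiff ℝ (⊤ : ℕ∞) (fun y => pT ψ t y) := contDiff_pT_slice hψ t
  have hnTψCD : ContDiffAt ℝ (⊤ : ℕ∞) (nablaT f ψ t) x :=
    hpTψCD.contDiffAt.sub ((hpTψCD.contDiffAt.inner ℝ hτCD).smul hτCD)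
  have hdnTψCA : ContinuousAt (deriv (nablaT f ψ t)) x := continuousAt_deriv hnTψCD
  have hnSnTCA : ContinuousAt (nablaS (f t) (nablaT f ψ t)) x :=
    (hwCA.smul hdnTψCA).sub (((hwCA.smul hdnTψCA).inner (𝕜 := ℝ) hτCA).smul hτCA)
  -- continuity of `y ↦ pT (fun s => nablaS (f s) (ψ s)) t y`
  set FXf : ℝ × ℝ → EuclideanSpace ℝ (Fin n) :=
    fun q => fderiv ℝ (Function.uncurry f) q (0, 1) with hFXfdef
  set FXψ : ℝ × ℝ → EuclideanSpace ℝ (Fin n) :=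
    fun q => fderiv ℝ (Function.uncurry ψ) q (0, 1) with hFXψdef
  have hFXfC : ContDiff ℝ (⊤ : ℕ∞) FXf := contDiff_apply_clm hf _
  have hFXψC : ContDiff ℝ (⊤ : ℕ∞) FXψ := contDiff_apply_clm hψ _
  set O : Set (ℝ × ℝ) := FXf ⁻¹' {0}ᶜ with hOdef
  have hOopen : IsOpen O := isOpen_compl_singleton.preimage hFXfC.continuous
  have hqO : (t, x) ∈ O := by
    have e : deriv (f t) x = FXf (t, x) := (hasDerivAt_snd' hf t x).deriv
    simp only [hOdef, mem_preimage, mem_compl_iff, mem_singleton_iff]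
    rw [← e]; exact hFx
  set G2 : ℝ × ℝ → EuclideanSpace ℝ (Fin n) := fun q =>
    ‖FXf q‖⁻¹ • FXψ q
      - ⟪‖FXf q‖⁻¹ • FXψ q, ‖FXf q‖⁻¹ • FXf q⟫ • (‖FXf q‖⁻¹ • FXf q) with hG2def
  have hG2 : ContDiffOn ℝ (⊤ : ℕ∞) G2 O := by
    have h0 : ∀ q ∈ O, FXf q ≠ 0 := fun q hq => hq
    have hnorm : ContDiffOn ℝ (⊤ : ℕ∞) (fun q => ‖FXf q‖) O := hFXfC.contDiffOn.norm ℝ h0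
    have hw : ContDiffOn ℝ (⊤ : ℕ∞) (fun q => ‖FXf q‖⁻¹) O :=
      hnorm.inv fun q hq => norm_ne_zero_iff.2 (h0 q hq)
    have hsd := hw.smul hFXψC.contDiffOn
    have hτ2 := hw.smul hFXfC.contDiffOn
    exact hsd.sub ((hsd.inner ℝ hτ2).smul hτ2)
  have hG2eq : ∀ s y, nablaS (f s) (ψ s) y = G2 (s, y) := by
    intro s y
    have e1 : deriv (f s) y = FXf (s, y) := (hasDerivAt_snd' hf s y).deriv
    have e2 : deriv (ψ s) y = FXψ (s, y) := (hasDerivAt_snd' hψ s y).deriv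
    show ‖deriv (f s) y‖⁻¹ • deriv (ψ s) y
        - ⟪‖deriv (f s) y‖⁻¹ • deriv (ψ s) y, ‖deriv (f s) y‖⁻¹ • deriv (f s) y⟫ •
          (‖deriv (f s) y‖⁻¹ • deriv (f s) y)
        = ‖FXf (s, y)‖⁻¹ • FXψ (s, y)
          - ⟪‖FXf (s, y)‖⁻¹ • FXψ (s, y), ‖FXf (s, y)‖⁻¹ • FXf (s, y)⟫ •
            (‖FXf (s, y)‖⁻¹ • FXf (s, y))
    rw [e1, e2]
  have hpg : ∀ y, (t, y) ∈ O →
      pT (fun s => nablaS (f s) (ψ s)) t y = fderiv ℝ G2 (t, y) (1, 0) := by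
    intro y hy
    have hd : DifferentiableAt ℝ G2 (t, y) :=
      (hG2.contDiffAt (hOopen.mem_nhds hy)).differentiableAt (by simp)
    have h1 : HasDerivAt (fun s => G2 (s, y)) (fderiv ℝ G2 (t, y) (1, 0)) t :=
      by have := hd.hasFDerivAt.comp_hasDerivAt t (HasDerivAt.prodMk (hasDerivAt_id' t) (hasDerivAt_const t y)); exact this
    have e : (fun s => nablaS (f s) (ψ s) y) = fun s => G2 (s, y) :=
      funext fun s => hG2eq s y
    rw [show pT (fun s => nablaS (f s) (ψ s)) t y
        = deriv (fun s => nablaS (f s) (ψ s) y) t from rfl, e]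
    exact h1.deriv
  have hOy : ∀ᶠ y in nhds x, (t, y) ∈ O :=
    (hOopen.preimage (Continuous.prodMk_right t)).mem_nhds hqO
  have hfdCA : ContinuousAt (fun y => fderiv ℝ G2 (t, y) (1, 0)) x := by
    have hcO : ContinuousOn (fderiv ℝ G2) O := hG2.continuousOn_fderiv_of_isOpen hOopen wtop1
    have h1 : ContinuousAt (fderiv ℝ G2) (t, x) := hcO.continuousAt (hOopen.mem_nhds hqO)
    have h2 : ContinuousAt (fun y => fderiv ℝ G2 (t, y)) x :=
      h1.comp (Continuous.prodMk_right t).continuousAt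
    exact (ContinuousLinearMap.apply ℝ (EuclideanSpace ℝ (Fin n))
      ((1 : ℝ), (0 : ℝ))).continuous.continuousAt.comp h2
  have hpTG_CA : ContinuousAt (fun y => pT (fun s => nablaS (f s) (ψ s)) t y) x := by
    refine hfdCA.congr ?_
    filter_upwards [hOy] with y hy using (hpg y hy).symm
  have hnTG_CA : ContinuousAt (fun y => nablaT f (fun s => nablaS (f s) (ψ s)) t y) x :=
    hpTG_CA.sub ((hpTG_CA.inner (𝕜 := ℝ) hτCA).smul hτCA)
  -- conclude by density of the interior
  have hL : ContinuousAt (fun y => nablaT f (fun s => nablaS (f s) (ψ s)) t y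
      - nablaS (f t) (nablaT f ψ t) y) x := hnTG_CA.sub hnSnTCA
  have hR : ContinuousAt (fun y =>
      (⟪kappa (f t) y, V t y⟫ - sDeriv (f t) (φ t) y) • nablaS (f t) (ψ t) y
        + ⟪kappa (f t) y, ψ t y⟫ • nablaS (f t) (V t) y
        - ⟪nablaS (f t) (V t) y, ψ t y⟫ • kappa (f t) y) x :=
    ((((hκCA.inner (𝕜 := ℝ) hVCA).sub hsDφCA).smul hnSψCA).add
      ((hκCA.inner (𝕜 := ℝ) hψCA).smul hnSVCA)).sub ((hnSVCA.inner (𝕜 := ℝ) hψCA).smul hκCA)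
  have hxcl : x ∈ closure (Ioo (0 : ℝ) 1) := by
    rw [closure_Ioo (by norm_num : (0 : ℝ) ≠ 1)]; exact hx
  have hne : (nhdsWithin x (Ioo (0 : ℝ) 1)).NeBot := mem_closure_iff_nhdsWithin_neBot.1 hxcl
  have h1 := (hL.continuousWithinAt (s := Ioo (0 : ℝ) 1)).tendsto
  have h2 := (hR.continuousWithinAt (s := Ioo (0 : ℝ) 1)).tendsto
  refine tendsto_nhds_unique h1 (h2.congr' ?_)
  filter_upwards [self_mem_nhdsWithin] with y hy
  exact (key_interior hf hV hφ hreg hnormal hflow hψ hψnormal ht hy).symm
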